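/- For all n ≥ 1 and p ≥ 1, the number of primitive p-ascent sequences of length n avoiding the pattern 10 equals C(p+n-2, n-1). -/

import Mathlib

/-- Number of ascents of a sequence: indices j with a_j < a_{j+1}. -/
def ascN (l : List ℕ) : ℕ := (l.zip l.tail).countP (fun q => decide (q.1 < q.2))

/-- `a` is a p-ascent sequence: nonempty, starts with 0, and each later entry
is at most `p` plus the number of ascents of the preceding prefix. -/
def IsPAsc (p : ℕ) (a : List ℕ) : Prop :=
  a.head? = some 0 ∧ ∀ i : Fin a.length, 1 ≤ i.val → a.get i ≤ p + ascN (a.take i.val)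

def Avoids01 (a : List ℕ) : Prop := ∀ i j : Fin a.length, i < j → ¬ a.get i < a.get j

def Avoids10 (a : List ℕ) : Prop := ∀ i j : Fin a.length, i < j → ¬ a.get j < a.get i

def Avoids012 (a : List ℕ) : Prop :=
  ∀ i j k : Fin a.length, i < j → j < k → ¬ (a.get i < a.get j ∧ a.get j < a.get k)

/-- primitive: no two equal consecutive letters -/
def Primitive (a : List ℕ) : Prop := a.Chain' (· ≠ ·)

lemma ascN_chain' : ∀ (l : List ℕ), l.Chain' (· < ·) → ascN l = l.length - 1
  | [], _ => rfl
  | [_], _ => rfl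
  | a :: b :: t, h => by
      have hab : a < b := (List.isChain_cons_cons.1 h).1
      have ih := ascN_chain' (b :: t) (List.isChain_cons_cons.1 h).2
      simp only [ascN, List.tail_cons, List.zip_cons_cons, List.countP_cons,
        List.length_cons] at ih ⊢
      simp [hab]
      omega

lemma get_add_le (l : List ℕ) (h : l.Chain' (· < ·)) :
    ∀ j (hj : j < l.length) i (hi : i < l.length), i ≤ j →
      l.get ⟨i, hi⟩ + (j - i) ≤ l.get ⟨j, hj⟩ := by
  intro j
  induction j with
  | zero =>
      intro hj i hi hij
      have hi0 : i = 0 := by omega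
      subst hi0
      simp only [Nat.sub_self, Nat.add_zero]
      exact Nat.le_of_eq rfl
  | succ j ih =>
      intro hj i hi hij
      have hj' : j < l.length := by omega
      have hstep : l.get ⟨j, hj'⟩ < l.get ⟨j + 1, hj⟩ :=
        List.isChain_iff_getElem.1 h j (by omega)
      rcases Nat.eq_or_lt_of_le hij with rfl | hlt
      · simp only [Nat.sub_self, Nat.add_zero]
        exact Nat.le_of_eq rfl
      · have h2 := ih hj' i hi (by omega)
        omega

lemma mem_iff_aux (p : ℕ) (a : List ℕ) :
    (IsPAsc p a ∧ Primitive a ∧ Avoids10 a) ↔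
      (a.head? = some 0 ∧ a.Chain' (· < ·) ∧
        ∀ i (hi : i < a.length), 1 ≤ i → a.get ⟨i, hi⟩ + 1 ≤ p + i) := by
  constructor
  · rintro ⟨⟨h0, hb⟩, hprim, hav⟩
    have hc : a.Chain' (· < ·) := by
      refine List.isChain_iff_getElem.2 ?_
      intro i hi
      have hne := List.isChain_iff_getElem.1 hprim i hi
      have hle : ¬ a.get ⟨i + 1, by omega⟩ < a.get ⟨i, by omega⟩ :=
        hav ⟨i, by omega⟩ ⟨i + 1, by omega⟩ (by simp)
      simp only [List.get_eq_getElem] at hle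
      omega
    refine ⟨h0, hc, ?_⟩
    intro i hi h1
    have hbi := hb ⟨i, hi⟩ h1
    have htake : ascN (a.take i) = i - 1 := by
      rw [ascN_chain' _ (hc.take i)]
      simp only [List.length_take]
      omega
    simp only [List.get_eq_getElem] at hbi ⊢
    omega
  · rintro ⟨h0, hc, hb⟩
    have hpw : ∀ i j : Fin a.length, i < j → a.get i < a.get j := by
      intro i j hij
      exact List.pairwise_iff_get.1 (List.isChain_iff_pairwise.1 hc) i j hij
    refine ⟨⟨h0, ?_⟩, hc.imp (fun _ _ h => Nat.ne_of_lt h), ?_⟩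
    · intro i h1
      have htake : ascN (a.take i.val) = i.val - 1 := by
        rw [ascN_chain' _ (hc.take i.val)]
        have := i.isLt
        simp only [List.length_take]
        omega
      have := hb i.val i.isLt h1
      simp only [List.get_eq_getElem] at this ⊢
      omega
    · intro i j hij
      have := hpw i j hij
      omega

def gmap (p m : ℕ) (s : Sym (Fin p) m) : List ℕ :=
  0 :: (Multiset.sort (Multiset.map Fin.val s.1) (· ≤ ·)).mapIdx (fun i b => b + i + 1)

lemma gmap_sort_length {p m : ℕ} (s : Sym (Fin p) m) :
    (Multiset.sort (Multiset.map Fin.val s.1) (· ≤ ·)).length = m := by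
  rw [Multiset.length_sort, Multiset.card_map, s.2]

lemma gmap_sort_lt {p m : ℕ} (s : Sym (Fin p) m) :
    ∀ x ∈ Multiset.sort (Multiset.map Fin.val s.1) (· ≤ ·), x < p := by
  intro x hx
  rw [Multiset.mem_sort, Multiset.mem_map] at hx
  obtain ⟨y, _, rfl⟩ := hx
  exact y.isLt

theorem stmt2 (n p : ℕ) (hn : 1 ≤ n) (hp : 1 ≤ p) :
    Set.ncard {a : List ℕ | a.length = n ∧ IsPAsc p a ∧ Primitive a ∧ Avoids10 a} =
      (p + n - 2).choose (n - 1) := by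
  set m := n - 1 with hm
  have hn' : n = m + 1 := by omega
  have hS : {a : List ℕ | a.length = n ∧ IsPAsc p a ∧ Primitive a ∧ Avoids10 a} =
      Set.range (gmap p m) := by
    ext a
    simp only [Set.mem_setOf_eq, Set.mem_range]
    constructor
    · rintro ⟨hlen, hrest⟩
      obtain ⟨h0, hc, hb⟩ := (mem_iff_aux p a).1 hrest
      have h00 : a.get ⟨0, by omega⟩ = 0 := by
        cases a with
        | nil => simp at h0
        | cons x t => simp only [List.head?_cons, Option.some.injEq] at h0; simpa using h0
      have hge : ∀ i (hi : i < a.length), i ≤ a.get ⟨i, hi⟩ := by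
        intro i hi
        have := get_add_le a hc i hi 0 (by omega) (by omega)
        omega
      set l := a.tail.mapIdx (fun i x => x - (i + 1)) with hl
      have hlL : l.length = m := by
        simp [hl, hlen, hn']
      have hLget : ∀ i (hi : i < l.length) (hi2 : i + 1 < a.length),
          l.get ⟨i, hi⟩ = a.get ⟨i + 1, hi2⟩ - (i + 1) := by
        intro i hi hi2
        simp only [hl, List.get_eq_getElem, List.getElem_mapIdx]
        congr 1
        have hti : i < a.tail.length := by simpa [hl] using hi
        exact List.getElem_tail hti
      have hLlt : ∀ x ∈ l, x < p := by
        intro x hx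
        obtain ⟨⟨i, hi⟩, rfl⟩ := List.mem_iff_get.1 hx
        have hi2 : i + 1 < a.length := by
          have : l.length = a.length - 1 := by simp [hl]
          omega
        rw [hLget i hi hi2]
        have := hb (i + 1) hi2 (by omega)
        have := hge (i + 1) hi2
        omega
      have hLsorted : l.Pairwise (· ≤ ·) := by
        rw [List.pairwise_iff_get]
        rintro ⟨i, hi⟩ ⟨j, hj⟩ hij
        have hij' : i < j := hij
        have hi2 : i + 1 < a.length := by
          have : l.length = a.length - 1 := by simp [hl]
          omega
        have hj2 : j + 1 < a.length := by
          have : l.length = a.length - 1 := by simp [hl]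
          omega
        rw [hLget i hi hi2, hLget j hj hj2]
        have hd := get_add_le a hc (j + 1) hj2 (i + 1) hi2 (by omega)
        have := hge (i + 1) hi2
        omega
      refine ⟨⟨(↑(l.pmap (fun x hx => (⟨x, hx⟩ : Fin p)) hLlt) : Multiset (Fin p)),
        by simp [hlL]⟩, ?_⟩
      have h1 : Multiset.map Fin.val
          (↑(l.pmap (fun x hx => (⟨x, hx⟩ : Fin p)) hLlt) : Multiset (Fin p)) =
          (l : Multiset ℕ) := by
        simp [List.map_pmap]
      have h2 : Multiset.sort (l : Multiset ℕ) (· ≤ ·) = l :=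
        List.Perm.eq_of_pairwise' (Multiset.pairwise_sort _ _) hLsorted
          (Multiset.coe_eq_coe.1 (Multiset.sort_eq _ _))
      show gmap p m _ = a
      unfold gmap
      simp only [h1, h2]
      apply List.ext_get
      · simp [hlL, hlen, hn']
      · intro i hi1 hi2
        cases i with
        | zero => simpa using h00.symm
        | succ i =>
            have hil : i < l.length := by
              simpa [List.length_mapIdx] using hi1
            have hi2' : i + 1 < a.length := by
              have : l.length = a.length - 1 := by simp [hl]
              omega
            simp only [List.get_eq_getElem, List.getElem_cons_succ, List.getElem_mapIdx]
            have h3 := hLget i hil hi2'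
            have h4 := hge (i + 1) hi2'
            simp only [List.get_eq_getElem] at h3 h4
            omega
    · rintro ⟨s, rfl⟩
      set l := Multiset.sort (Multiset.map Fin.val s.1) (· ≤ ·) with hl
      have hlL : l.length = m := gmap_sort_length s
      have hlt := gmap_sort_lt s
      have hsort : l.Pairwise (· ≤ ·) := Multiset.pairwise_sort _ _
      have hlen : (gmap p m s).length = n := by
        simp [gmap, ← hl, List.length_mapIdx, hlL, hn']
      refine ⟨hlen, (mem_iff_aux p _).2 ⟨rfl, ?_, ?_⟩⟩
      · refine List.isChain_iff_getElem.2 ?_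
        intro i hi
        have hlen2 : (gmap p m s).length = l.length + 1 := by
          simp [gmap, ← hl, List.length_mapIdx, hlL]
        cases i with
        | zero =>
            simp [gmap, ← hl, List.get_eq_getElem, List.getElem_mapIdx]
        | succ i =>
            have hi1 : i < l.length := by omega
            have hi2 : i + 1 < l.length := by omega
            have hle : l.get ⟨i, hi1⟩ ≤ l.get ⟨i + 1, hi2⟩ :=
              List.pairwise_iff_get.1 hsort ⟨i, hi1⟩ ⟨i + 1, hi2⟩ (by simp)
            simp only [gmap, ← hl, List.get_eq_getElem, List.getElem_cons_succ,
              List.getElem_mapIdx]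
            simp only [List.get_eq_getElem] at hle
            omega
      · intro i hi h1
        have hlen2 : (gmap p m s).length = l.length + 1 := by
          simp [gmap, ← hl, List.length_mapIdx, hlL]
        cases i with
        | zero => omega
        | succ i =>
            have hi1 : i < l.length := by omega
            have hmem : l.get ⟨i, hi1⟩ ∈ l := List.get_mem l ⟨i, hi1⟩
            have := hlt _ hmem
            simp only [gmap, ← hl, List.get_eq_getElem, List.getElem_cons_succ,
              List.getElem_mapIdx]
            simp only [List.get_eq_getElem] at this
            omega
  have hinj : Function.Injective (gmap p m) := by
    intro s t hst
    have hls := gmap_sort_length s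
    have hlt' := gmap_sort_length t
    rw [gmap, gmap, List.cons.injEq] at hst
    have htail := hst.2
    have hsort_eq : Multiset.sort (Multiset.map Fin.val s.1) (· ≤ ·) =
        Multiset.sort (Multiset.map Fin.val t.1) (· ≤ ·) := by
      apply List.ext_get
      · rw [hls, hlt']
      · intro i hi1 hi2
        have h5 := List.get_of_eq htail ⟨i, by rw [List.length_mapIdx]; exact hi1⟩
        simp only [List.get_eq_getElem, List.getElem_mapIdx] at h5
        simp only [List.get_eq_getElem]
        omega
    have hmeq : Multiset.map Fin.val s.1 = Multiset.map Fin.val t.1 := by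
      rw [← Multiset.sort_eq (Multiset.map Fin.val s.1) (· ≤ ·),
        ← Multiset.sort_eq (Multiset.map Fin.val t.1) (· ≤ ·), hsort_eq]
    have : s.1 = t.1 := Multiset.map_injective Fin.val_injective hmeq
    exact Subtype.ext this
  rw [hS, ← Set.image_univ, Set.ncard_image_of_injective _ hinj, Set.ncard_univ,
    Nat.card_eq_fintype_card, Sym.card_sym_eq_multichoose, Fintype.card_fin,
    Nat.multichoose_eq]
  congr 1 <;> omega
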